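/- (Main theorem) Let k ≥ 2, m ≥ 1, and let H be a k-uniform hypergraph on km vertices with a unique perfect matching. Then the number of edges of H is at most f(k,m) = m + Σ_{ℓ=2}^{k} b_{k,ℓ} C(m,ℓ), where b_{k,ℓ} = ((ℓ-1)/ℓ) Σ_{i=0}^{ℓ-1} (-1)^i C(ℓ,i) C(k(ℓ-i),k). -/

import Mathlib

open Finset

def b (k l : ℕ) : ℚ :=
  ((l - 1 : ℚ) / l) *
    ∑ i ∈ Finset.range l, (-1 : ℚ) ^ i * (l.choose i) * ((k * (l - i)).choose k)

def f (k m : ℕ) : ℚ := m + ∑ l ∈ Finset.Icc 2 k, b k l * (m.choose l)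


namespace UPM

def good (k l : ℕ) [NeZero l] (a : ZMod l → ℕ) : Prop := (∀ q, 0 < a q) ∧ ∑ q, a q = k

lemma good_def {k l : ℕ} [NeZero l] {a : ZMod l → ℕ} (h : good k l a) :
    (∀ q, 0 < a q) ∧ ∑ q, a q = k := h

instance (k l : ℕ) [NeZero l] : DecidablePred (good k l) := fun _ => by
  unfold good; infer_instance

def off {l : ℕ} (a : ZMod l → ℕ) (q : ZMod l) : ℕ :=
  ∑ i ∈ Finset.range q.val, a (i : ZMod l)

variable {k l : ℕ} [NeZero l]

lemma sum_zmod (a : ZMod l → ℕ) : ∑ q, a q = ∑ i ∈ Finset.range l, a (i : ZMod l) := by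
  refine Finset.sum_nbij' (fun q => q.val) (fun i => (i : ZMod l)) ?_ ?_ ?_ ?_ ?_
  · intro q _; exact Finset.mem_range.2 (ZMod.val_lt q)
  · intro i _; exact Finset.mem_univ _
  · intro q _; exact ZMod.natCast_rightInverse q
  · intro i hi; exact ZMod.val_cast_of_lt (Finset.mem_range.1 hi)
  · intro q _; rw [ZMod.natCast_rightInverse q]

lemma off_add_self {a : ZMod l → ℕ} (q : ZMod l) :
    off a q + a q = ∑ i ∈ Finset.range (q.val + 1), a (i : ZMod l) := by
  rw [Finset.sum_range_succ, off, ZMod.natCast_rightInverse q]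

lemma off_add_le {a : ZMod l → ℕ} (h : good k l a) (q : ZMod l) :
    off a q + a q ≤ k := by
  rw [off_add_self, ← (good_def h).2, sum_zmod]
  exact Finset.sum_le_sum_of_subset (Finset.range_subset_range.2 (ZMod.val_lt q))

lemma off_mono {a : ZMod l → ℕ} {q q' : ZMod l} (h : q.val < q'.val) :
    off a q + a q ≤ off a q' := by
  rw [off_add_self, off]
  exact Finset.sum_le_sum_of_subset (Finset.range_subset_range.2 h)

def itv (k : ℕ) {l : ℕ} (a : ZMod l → ℕ) (q : ZMod l) : Finset (Fin k) :=
  (Finset.Ico (off a q) (min (off a q + a q) k)).attachFin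
    (fun _ hm => lt_of_lt_of_le (Finset.mem_Ico.1 hm).2 (min_le_right _ _))

lemma mem_itv {a : ZMod l → ℕ} (h : good k l a) {q : ZMod l} {c : Fin k} :
    c ∈ itv k a q ↔ off a q ≤ (c : ℕ) ∧ (c : ℕ) < off a q + a q := by
  rw [itv, Finset.mem_attachFin, Finset.mem_Ico,
    min_eq_left (off_add_le h q)]

lemma card_itv {a : ZMod l → ℕ} (h : good k l a) (q : ZMod l) :
    (itv k a q).card = a q := by
  rw [itv, Finset.card_attachFin, Nat.card_Ico, min_eq_left (off_add_le h q)]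
  omega

lemma itv_disjoint {a : ZMod l → ℕ} (h : good k l a) {q q' : ZMod l} (hqq : q ≠ q') :
    Disjoint (itv k a q) (itv k a q') := by
  rw [Finset.disjoint_left]
  intro c hc hc'
  rw [mem_itv h] at hc hc'
  have hv : q.val ≠ q'.val := fun hv => hqq (ZMod.val_injective l hv)
  rcases Nat.lt_or_ge q.val q'.val with hlt | hge
  · have := off_mono (a := a) hlt; omega
  · have : q'.val < q.val := by omega
    have := off_mono (a := a) this; omega

lemma itv_cover {a : ZMod l → ℕ} (h : good k l a) :
    Finset.univ.biUnion (itv k a) = (Finset.univ : Finset (Fin k)) := by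
  apply Finset.eq_univ_of_card
  rw [Finset.card_biUnion (fun q _ q' _ hqq => itv_disjoint h hqq)]
  simp only [card_itv h]
  rw [(good_def h).2, Fintype.card_fin]

end UPM

open Finset

namespace UPM

variable {α : Type*} [DecidableEq α] {k l : ℕ} [NeZero l]
variable (B : ZMod l → Finset α)

noncomputable def eb (hB : ∀ j, (B j).card = k) (j : ZMod l) (c : Fin k) : α :=
  ((B j).equivFin.symm (Fin.cast (hB j).symm c) : α)

variable (hB : ∀ j, (B j).card = k)

lemma eb_mem (j : ZMod l) (c : Fin k) : eb B hB j c ∈ B j := Finset.coe_mem _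

lemma eb_inj (j : ZMod l) : Function.Injective (eb B hB j) := by
  intro c c' h
  have h2 := Subtype.coe_injective h
  have h3 := (B j).equivFin.symm.injective h2
  exact Fin.cast_injective _ h3

lemma eb_surj (j : ZMod l) : ∀ v ∈ B j, ∃ c, eb B hB j c = v := by
  intro v hv
  refine ⟨Fin.cast (hB j) ((B j).equivFin ⟨v, hv⟩), ?_⟩
  simp [eb]

def Xset (k l : ℕ) [NeZero l] : Finset ((ZMod l → Equiv.Perm (Fin k)) × (ZMod l → ℕ)) :=
  Finset.univ ×ˢ ((Fintype.piFinset fun _ => Finset.range (k+1)).filter (good k l))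

lemma mem_Xset {x : (ZMod l → Equiv.Perm (Fin k)) × (ZMod l → ℕ)} :
    x ∈ Xset k l ↔ good k l x.2 := by
  rw [Xset, Finset.mem_product]
  constructor
  · intro h
    exact (Finset.mem_filter.1 h.2).2
  · intro h
    refine ⟨Finset.mem_univ _, Finset.mem_filter.2 ⟨?_, h⟩⟩
    rw [Fintype.mem_piFinset]
    intro q
    rw [Finset.mem_range]
    have h1 : x.2 q ≤ ∑ q', x.2 q' :=
      Finset.single_le_sum (fun i _ => Nat.zero_le _) (Finset.mem_univ q)
    have h2 := (good_def h).2
    omega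

noncomputable def parts (x : (ZMod l → Equiv.Perm (Fin k)) × (ZMod l → ℕ)) (p : ZMod l) :
    Finset α :=
  Finset.univ.biUnion (fun j => (itv k x.2 (p+j)).image (fun c => eb B hB j (x.1 j c)))

variable (hd : ∀ ⦃j j' : ZMod l⦄, j ≠ j' → Disjoint (B j) (B j'))

include hd in
lemma parts_inter {x} (j p : ZMod l) :
    parts B hB x p ∩ B j = (itv k x.2 (p+j)).image (fun c => eb B hB j (x.1 j c)) := by
  ext v
  simp only [Finset.mem_inter, parts, Finset.mem_biUnion, Finset.mem_univ, true_and]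
  constructor
  · rintro ⟨⟨j', hj'⟩, hvj⟩
    obtain ⟨c, _, rfl⟩ := Finset.mem_image.1 hj'
    rcases eq_or_ne j' j with rfl | hne
    · exact hj'
    · exact absurd hvj (Finset.disjoint_left.1 (hd hne) (eb_mem B hB j' _))
  · intro hv
    obtain ⟨c, _, rfl⟩ := Finset.mem_image.1 hv
    exact ⟨⟨j, hv⟩, eb_mem B hB j _⟩

lemma parts_subset (x) (p : ZMod l) :
    parts B hB x p ⊆ Finset.univ.biUnion B := by
  intro v hv
  obtain ⟨j, _, hj⟩ := Finset.mem_biUnion.1 hv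
  obtain ⟨c, _, rfl⟩ := Finset.mem_image.1 hj
  exact Finset.mem_biUnion.2 ⟨j, Finset.mem_univ _, eb_mem B hB j _⟩

include hd in
lemma card_parts {x} (hg : good k l x.2) (p : ZMod l) :
    (parts B hB x p).card = k := by
  rw [parts, Finset.card_biUnion]
  · have h1 : ∀ j : ZMod l,
        ((itv k x.2 (p+j)).image (fun c => eb B hB j (x.1 j c))).card = x.2 (p+j) := by
      intro j
      rw [Finset.card_image_of_injective _ (fun c c' h => (x.1 j).injective (eb_inj B hB j h)),
        card_itv hg]
    simp only [h1]
    rw [Fintype.sum_bijective (fun q => p + q) (Equiv.addLeft p).bijective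
      (fun j => x.2 (p+j)) x.2 (fun j => rfl)]
    exact (good_def hg).2
  · intro j _ j' _ hne
    refine Finset.disjoint_left.2 fun v hv hv' => ?_
    obtain ⟨c, _, rfl⟩ := Finset.mem_image.1 hv
    obtain ⟨c', _, hc'⟩ := Finset.mem_image.1 hv'
    exact Finset.disjoint_left.1 (hd hne) (eb_mem B hB j _) (hc' ▸ eb_mem B hB j' (x.1 j' c'))

include hd in
include hd in
lemma parts_inter_nonempty {x} (hg : good k l x.2) (j p : ZMod l) :
    (parts B hB x p ∩ B j).Nonempty := by
  rw [parts_inter B hB hd]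
  apply Finset.Nonempty.image
  rw [← Finset.card_pos, card_itv hg]
  exact (good_def hg).1 _

include hd in
lemma parts_disj {x} (hg : good k l x.2) {p p' : ZMod l} (hpp : p ≠ p') :
    Disjoint (parts B hB x p) (parts B hB x p') := by
  refine Finset.disjoint_left.2 fun v hv hv' => ?_
  obtain ⟨j, _, hj⟩ := Finset.mem_biUnion.1 hv
  obtain ⟨j', _, hj'⟩ := Finset.mem_biUnion.1 hv'
  obtain ⟨c, hc, rfl⟩ := Finset.mem_image.1 hj
  obtain ⟨c', hc', hcc⟩ := Finset.mem_image.1 hj'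
  rcases eq_or_ne j j' with rfl | hne
  · have : c' = c := (x.1 j).injective (eb_inj B hB j hcc)
    subst this
    have hqq : p + j ≠ p' + j := fun h => hpp (by simpa using h)
    exact Finset.disjoint_left.1 (itv_disjoint hg hqq) hc hc'
  · exact Finset.disjoint_left.1 (hd hne.symm) (hcc ▸ eb_mem B hB j' (x.1 j' c')) (eb_mem B hB j (x.1 j c))

lemma parts_cover {x} (hg : good k l x.2) :
    Finset.univ.biUnion (parts B hB x) = Finset.univ.biUnion B := by
  apply Finset.Subset.antisymm
  · intro v hv
    obtain ⟨p, _, hp⟩ := Finset.mem_biUnion.1 hv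
    exact parts_subset B hB x p hp
  · intro v hv
    obtain ⟨j, _, hj⟩ := Finset.mem_biUnion.1 hv
    obtain ⟨c', rfl⟩ := eb_surj B hB j v hj
    set c := (x.1 j)⁻¹ c' with hc
    have hcc : x.1 j c = c' := by simp [hc]
    have : c ∈ Finset.univ.biUnion (itv k x.2) := by rw [itv_cover hg]; exact Finset.mem_univ _
    obtain ⟨q, _, hq⟩ := Finset.mem_biUnion.1 this
    refine Finset.mem_biUnion.2 ⟨q - j, Finset.mem_univ _, ?_⟩
    refine Finset.mem_biUnion.2 ⟨j, Finset.mem_univ _, ?_⟩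
    refine Finset.mem_image.2 ⟨c, ?_, by rw [hcc]⟩
    rwa [sub_add_cancel]

end UPM

namespace UPM

lemma perm_image_inv {β : Type*} [DecidableEq β] (σ : Equiv.Perm β) (s : Finset β) :
    Finset.image (⇑σ⁻¹) (Finset.image (⇑σ) s) = s := by
  rw [Finset.image_image]
  have h : (⇑σ⁻¹ ∘ ⇑σ) = id := by
    funext c; simp
  rw [h, Finset.image_id]

lemma image_perm_mul {β : Type*} [DecidableEq β] (f g : Equiv.Perm β) (s : Finset β) :
    Finset.image (⇑(f * g)) s = Finset.image (⇑f) (Finset.image (⇑g) s) := by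
  rw [Finset.image_image]
  rfl

lemma image_fun_comp {β γ : Type*} [DecidableEq β] [DecidableEq γ]
    (g : β → γ) (f : β → β) (s : Finset β) :
    s.image (fun c => g (f c)) = (s.image f).image g := by
  rw [Finset.image_image]
  rfl

lemma exists_perm_image {n : ℕ} {s t : Finset (Fin n)} (h : s.card = t.card) :
    ∃ σ : Equiv.Perm (Fin n), s.image σ = t := by
  have h1 : Fintype.card {x // x ∈ s} = Fintype.card {x // x ∈ t} := by
    simpa using h
  have h2 : Fintype.card {x // ¬ x ∈ s} = Fintype.card {x // ¬ x ∈ t} := by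
    rw [Fintype.card_subtype_compl, Fintype.card_subtype_compl, h1]
  refine ⟨(Equiv.sumCompl (· ∈ s)).symm.trans
    (((Fintype.equivOfCardEq h1).sumCongr (Fintype.equivOfCardEq h2)).trans
      (Equiv.sumCompl (· ∈ t))), ?_⟩
  have hsub : ∀ c ∈ s, ((Equiv.sumCompl (· ∈ s)).symm.trans
      (((Fintype.equivOfCardEq h1).sumCongr (Fintype.equivOfCardEq h2)).trans
        (Equiv.sumCompl (· ∈ t)))) c ∈ t := by
    intro c hc
    simp only [Equiv.trans_apply, Equiv.sumCompl_symm_apply_of_pos hc, Equiv.sumCongr_apply,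
      Sum.map_inl, Equiv.sumCompl_apply_inl]
    exact Finset.coe_mem _
  have himg : s.image _ ⊆ t := fun v hv => by
    obtain ⟨c, hc, rfl⟩ := Finset.mem_image.1 hv
    exact hsub c hc
  refine Finset.eq_of_subset_of_card_le himg ?_
  rw [Finset.card_image_of_injective _ (Equiv.injective _), h]

variable {α : Type*} [DecidableEq α] {k l : ℕ} [NeZero l]
variable (B : ZMod l → Finset α) (hB : ∀ j, (B j).card = k)
variable (hd : ∀ ⦃j j' : ZMod l⦄, j ≠ j' → Disjoint (B j) (B j'))

include hd in
lemma inter_block_biUnion {A : Finset α} (hA : A ⊆ Finset.univ.biUnion B) :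
    Finset.univ.biUnion (fun j => A ∩ B j) = A := by
  ext v
  constructor
  · intro hv
    obtain ⟨j, _, hj⟩ := Finset.mem_biUnion.1 hv
    exact (Finset.mem_inter.1 hj).1
  · intro hv
    obtain ⟨j, _, hj⟩ := Finset.mem_biUnion.1 (hA hv)
    exact Finset.mem_biUnion.2 ⟨j, Finset.mem_univ _, Finset.mem_inter.2 ⟨hv, hj⟩⟩

include hd in
lemma parts_eq_iff {x x' : (ZMod l → Equiv.Perm (Fin k)) × (ZMod l → ℕ)}
    (hg : good k l x.2) (hg' : good k l x'.2) (p : ZMod l) :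
    parts B hB x' p = parts B hB x p ↔
      x'.2 = x.2 ∧ ∀ j, (itv k x.2 (p+j)).image (x'.1 j) = (itv k x.2 (p+j)).image (x.1 j) := by
  constructor
  · intro h
    have hj : ∀ j, (itv k x'.2 (p+j)).image (fun c => eb B hB j (x'.1 j c))
        = (itv k x.2 (p+j)).image (fun c => eb B hB j (x.1 j c)) := by
      intro j
      rw [← parts_inter B hB hd, ← parts_inter B hB hd, h]
    have ha : x'.2 = x.2 := by
      funext q
      have hcards := congrArg Finset.card (hj (q - p))
      rw [Finset.card_image_of_injective _ (fun c c' hcc => (x'.1 _).injective (eb_inj B hB _ hcc)),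
        Finset.card_image_of_injective _ (fun c c' hcc => (x.1 _).injective (eb_inj B hB _ hcc)),
        card_itv hg', card_itv hg, add_sub_cancel] at hcards
      exact hcards
    refine ⟨ha, fun j => ?_⟩
    have h2 := hj j
    rw [ha] at h2
    have h3 : ((itv k x.2 (p+j)).image (x'.1 j)).image (eb B hB j)
        = ((itv k x.2 (p+j)).image (x.1 j)).image (eb B hB j) := by
      rw [Finset.image_image, Finset.image_image]
      exact h2
    exact Finset.image_injective (eb_inj B hB j) h3
  · rintro ⟨ha, himg⟩
    rw [parts, parts]
    apply Finset.biUnion_congr rfl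
    intro j _
    rw [ha]
    rw [image_fun_comp (eb B hB j) (⇑(x'.1 j)), image_fun_comp (eb B hB j) (⇑(x.1 j)), himg j]

include hd in
lemma exists_parts_eq {A : Finset α}
    (hA : A ⊆ Finset.univ.biUnion B) (hAmeets : ∀ j, (A ∩ B j).Nonempty)
    (hAcard : A.card = k) (p : ZMod l) :
    ∃ x ∈ Xset k l, parts B hB x p = A := by
  set a : ZMod l → ℕ := fun q => (A ∩ B (q - p)).card with ha
  have hgood : good k l a := by
    constructor
    · intro q
      rw [Finset.card_pos]
      exact hAmeets _
    · have h1 : ∑ q, a q = ∑ j, (A ∩ B j).card := by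
        exact Fintype.sum_bijective (fun q => q - p) (Equiv.subRight p).bijective
          a (fun j => (A ∩ B j).card) (fun q => rfl)
      rw [h1, ← Finset.card_biUnion, inter_block_biUnion B hd hA, hAcard]
      intro j _ j' _ hne
      exact Finset.disjoint_of_subset_left Finset.inter_subset_right
        (Finset.disjoint_of_subset_right Finset.inter_subset_right (hd hne))
  have hJcard : ∀ j : ZMod l,
      (Finset.univ.filter (fun c => eb B hB j c ∈ A)).card = (A ∩ B j).card := by
    intro j
    refine Finset.card_nbij (fun c => eb B hB j c) ?_ ?_ ?_
    · intro c hc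
      exact Finset.mem_inter.2 ⟨(Finset.mem_filter.1 hc).2, eb_mem B hB j c⟩
    · intro c hc c' hc' hcc
      exact eb_inj B hB j hcc
    · intro v hv
      obtain ⟨c, rfl⟩ := eb_surj B hB j v (Finset.mem_inter.1 hv).2
      exact ⟨c, by simp [Finset.mem_coe, Finset.mem_filter, (Finset.mem_inter.1 hv).1], rfl⟩
  have hperm : ∀ j : ZMod l, ∃ σ : Equiv.Perm (Fin k),
      (itv k a (p+j)).image σ = Finset.univ.filter (fun c => eb B hB j c ∈ A) := by
    intro j
    apply exists_perm_image
    rw [card_itv hgood, hJcard, ha]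
    simp [add_sub_cancel_left]
  choose σ hσ using hperm
  refine ⟨(σ, a), mem_Xset.2 hgood, ?_⟩
  have hpj : ∀ j : ZMod l, (itv k a (p+j)).image (fun c => eb B hB j (σ j c)) = A ∩ B j := by
    intro j
    rw [image_fun_comp (eb B hB j) (⇑(σ j)), hσ j]
    ext v
    constructor
    · intro hv
      obtain ⟨c, hc, rfl⟩ := Finset.mem_image.1 hv
      exact Finset.mem_inter.2 ⟨(Finset.mem_filter.1 hc).2, eb_mem B hB j c⟩
    · intro hv
      obtain ⟨c, rfl⟩ := eb_surj B hB j v (Finset.mem_inter.1 hv).2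
      exact Finset.mem_image.2 ⟨c, Finset.mem_filter.2 ⟨Finset.mem_univ _,
        (Finset.mem_inter.1 hv).1⟩, rfl⟩
  show (Finset.univ.biUnion fun j => (itv k a (p+j)).image (fun c => eb B hB j (σ j c))) = A
  have hcong : (Finset.univ.biUnion fun j => (itv k a (p+j)).image (fun c => eb B hB j (σ j c)))
      = Finset.univ.biUnion (fun j => A ∩ B j) :=
    Finset.biUnion_congr rfl (fun j _ => hpj j)
  rw [hcong]
  exact inter_block_biUnion B hd hA

include hd in
lemma fiber_card_eq {x : (ZMod l → Equiv.Perm (Fin k)) × (ZMod l → ℕ)}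
    (hx : x ∈ Xset k l) (p p' : ZMod l) :
    ((Xset k l).filter (fun y => parts B hB y p = parts B hB x p)).card
    = ((Xset k l).filter (fun y => parts B hB y p' = parts B hB x p')).card := by
  have hgx : good k l x.2 := mem_Xset.1 hx
  set δ := p - p' with hδ
  have hidx : ∀ j : ZMod l, p' + j = p + (j - δ) := by intro j; rw [hδ]; ring
  have hidx' : ∀ j : ZMod l, p + j = p' + (j + δ) := by intro j; rw [hδ]; ring
  refine Finset.card_nbij' (fun y => (fun j => x.1 j * (x.1 (j - δ))⁻¹ * y.1 (j - δ), y.2))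
    (fun z => (fun j => x.1 j * (x.1 (j + δ))⁻¹ * z.1 (j + δ), z.2)) ?_ ?_ ?_ ?_
  · intro y hy
    obtain ⟨hyX, hyp⟩ := Finset.mem_filter.1 hy
    have hgy : good k l y.2 := mem_Xset.1 hyX
    obtain ⟨ha, himg⟩ := (parts_eq_iff B hB hd hgx hgy p).1 hyp
    refine Finset.mem_filter.2 ⟨mem_Xset.2 (by simpa using hgy), ?_⟩
    refine (parts_eq_iff B hB hd hgx (by simpa using hgy) p').2 ⟨ha, fun j => ?_⟩
    rw [hidx j]
    show (itv k x.2 (p + (j - δ))).image ⇑(x.1 j * (x.1 (j - δ))⁻¹ * y.1 (j - δ)) = _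
    rw [image_perm_mul, image_perm_mul, himg (j - δ), perm_image_inv]
  · intro z hz
    obtain ⟨hzX, hzp⟩ := Finset.mem_filter.1 hz
    have hgz : good k l z.2 := mem_Xset.1 hzX
    obtain ⟨ha, himg⟩ := (parts_eq_iff B hB hd hgx hgz p').1 hzp
    refine Finset.mem_filter.2 ⟨mem_Xset.2 (by simpa using hgz), ?_⟩
    refine (parts_eq_iff B hB hd hgx (by simpa using hgz) p).2 ⟨ha, fun j => ?_⟩
    rw [hidx' j]
    show (itv k x.2 (p' + (j + δ))).image ⇑(x.1 j * (x.1 (j + δ))⁻¹ * z.1 (j + δ)) = _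
    rw [image_perm_mul, image_perm_mul, himg (j + δ), perm_image_inv]
  · intro y _
    refine Prod.ext ?_ rfl
    funext j
    show x.1 j * (x.1 (j + δ))⁻¹ * (x.1 (j + δ) * (x.1 (j + δ - δ))⁻¹ * y.1 (j + δ - δ)) = y.1 j
    rw [add_sub_cancel_right]
    group
  · intro z _
    refine Prod.ext ?_ rfl
    funext j
    show x.1 j * (x.1 (j - δ))⁻¹ * (x.1 (j - δ) * (x.1 (j - δ + δ))⁻¹ * z.1 (j - δ + δ)) = z.1 j
    rw [sub_add_cancel]
    group

end UPM

namespace UPM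

variable {α : Type*} [DecidableEq α] {k l : ℕ} [NeZero l]
variable (B : ZMod l → Finset α)

def Tset (k : ℕ) {l : ℕ} [NeZero l] (B : ZMod l → Finset α) : Finset (Finset α) :=
  ((Finset.univ.biUnion B).powersetCard k).filter (fun A => ∀ j, (A ∩ B j).Nonempty)

lemma mem_Tset {B : ZMod l → Finset α} {A : Finset α} :
    A ∈ Tset k B ↔ A ⊆ Finset.univ.biUnion B ∧ A.card = k ∧ ∀ j, (A ∩ B j).Nonempty := by
  rw [Tset, Finset.mem_filter, Finset.mem_powersetCard]
  tauto

variable (hB : ∀ j, (B j).card = k)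
variable (hd : ∀ ⦃j j' : ZMod l⦄, j ≠ j' → Disjoint (B j) (B j'))

include hB hd in
lemma core_ineq (E' : Finset (Finset α))
    (hE'T : ∀ e ∈ E', e ∈ Tset k B)
    (hno : ∀ g : ZMod l → Finset α, (∀ p, g p ∈ E') →
      (∀ p p', p ≠ p' → Disjoint (g p) (g p')) →
      Finset.univ.biUnion g = Finset.univ.biUnion B → False) :
    (l : ℚ) * E'.card ≤ ((l : ℚ) - 1) * (Tset k B).card := by
  classical
  have hl1 : 1 ≤ l := Nat.pos_of_ne_zero (NeZero.ne l)
  set X := Xset k l with hX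
  set T := Tset k B with hT
  set c : ZMod l → Finset α → ℕ :=
    fun p A => (X.filter (fun y => parts B hB y p = A)).card with hc
  have K_mem_T : ∀ x ∈ X, ∀ p, parts B hB x p ∈ T := by
    intro x hx p
    have hg : good k l x.2 := mem_Xset.1 hx
    exact mem_Tset.2 ⟨parts_subset B hB x p, card_parts B hB hd hg p,
      fun j => parts_inter_nonempty B hB hd hg j p⟩
  have Kpos : ∀ x ∈ X, ∀ p, 0 < c p (parts B hB x p) := by
    intro x hx p
    apply Finset.card_pos.2
    exact ⟨x, Finset.mem_filter.2 ⟨hx, rfl⟩⟩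
  have Ksurj : ∀ A ∈ T, ∀ p, 0 < c p A := by
    intro A hA p
    obtain ⟨hAsub, hAcard, hAmeets⟩ := mem_Tset.1 hA
    obtain ⟨x, hx, hxp⟩ := exists_parts_eq B hB hd hAsub hAmeets hAcard p
    exact Finset.card_pos.2 ⟨x, Finset.mem_filter.2 ⟨hx, hxp⟩⟩
  have Kconst : ∀ x ∈ X, ∀ p, c p (parts B hB x p) = c 0 (parts B hB x 0) := by
    intro x hx p
    exact fiber_card_eq B hB hd hx p 0
  have Kbound : ∀ x ∈ X, ((Finset.univ.filter (fun p => parts B hB x p ∈ E')).card : ℚ)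
      ≤ (l : ℚ) - 1 := by
    intro x hx
    have hg : good k l x.2 := mem_Xset.1 hx
    have hne : Finset.univ.filter (fun p => parts B hB x p ∈ E') ≠ Finset.univ := by
      intro hcontra
      apply hno (parts B hB x) _ (fun p p' hpp => parts_disj B hB hd hg hpp)
        (parts_cover B hB hg)
      intro p
      have : p ∈ Finset.univ.filter (fun p => parts B hB x p ∈ E') := by
        rw [hcontra]; exact Finset.mem_univ _
      exact (Finset.mem_filter.1 this).2
    have hlt : (Finset.univ.filter (fun p => parts B hB x p ∈ E')).card < l := by
      have hsub := Finset.filter_subset (fun p => parts B hB x p ∈ E') Finset.univ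
      have := Finset.card_lt_card (lt_of_le_of_ne hsub hne)
      rwa [Finset.card_univ, ZMod.card] at this
    have : (Finset.univ.filter (fun p => parts B hB x p ∈ E')).card ≤ l - 1 := by omega
    calc ((Finset.univ.filter (fun p => parts B hB x p ∈ E')).card : ℚ)
        ≤ ((l - 1 : ℕ) : ℚ) := by exact_mod_cast this
      _ = (l : ℚ) - 1 := by rw [Nat.cast_sub hl1]; norm_num
  have regroup : ∀ (p : ZMod l) (g : Finset α → ℚ),
      ∑ x ∈ X, g (parts B hB x p) = ∑ A ∈ T, (c p A : ℚ) * g A := by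
    intro p g
    rw [← Finset.sum_fiberwise_of_maps_to (fun x hx => K_mem_T x hx p)
      (fun x => g (parts B hB x p))]
    refine Finset.sum_congr rfl fun A _ => ?_
    have : ∀ y ∈ X.filter (fun y => parts B hB y p = A),
        g (parts B hB y p) = g A := by
      intro y hy
      rw [(Finset.mem_filter.1 hy).2]
    rw [Finset.sum_congr rfl this, Finset.sum_const, nsmul_eq_mul]
  have hE'sub : E' ⊆ T := fun e he => hE'T e he
  have S1 : ∀ p : ZMod l,
      ∑ x ∈ X, (if parts B hB x p ∈ E' then (1:ℚ) else 0) / (c p (parts B hB x p))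
      = E'.card := by
    intro p
    rw [regroup p (fun A => (if A ∈ E' then (1:ℚ) else 0) / (c p A))]
    have : ∀ A ∈ T, (c p A : ℚ) * ((if A ∈ E' then (1:ℚ) else 0) / (c p A))
        = (if A ∈ E' then (1:ℚ) else 0) := by
      intro A hA
      have hcA : (c p A : ℚ) ≠ 0 := by
        exact_mod_cast (Ksurj A hA p).ne'
      field_simp
    rw [Finset.sum_congr rfl this, Finset.sum_boole]
    congr 1
    rw [Finset.filter_mem_eq_inter, Finset.inter_eq_right.2 hE'sub]
  have S2 : ∑ x ∈ X, (1:ℚ) / (c 0 (parts B hB x 0)) = T.card := by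
    rw [regroup 0 (fun A => (1:ℚ) / (c 0 A))]
    have : ∀ A ∈ T, (c 0 A : ℚ) * ((1:ℚ) / (c 0 A)) = 1 := by
      intro A hA
      have hcA : (c 0 A : ℚ) ≠ 0 := by exact_mod_cast (Ksurj A hA 0).ne'
      field_simp
    rw [Finset.sum_congr rfl this, Finset.sum_const, nsmul_eq_mul, mul_one]
  calc (l : ℚ) * E'.card
      = ∑ _p : ZMod l, (E'.card : ℚ) := by
        rw [Finset.sum_const, Finset.card_univ, ZMod.card, nsmul_eq_mul]
    _ = ∑ p : ZMod l, ∑ x ∈ X,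
          (if parts B hB x p ∈ E' then (1:ℚ) else 0) / (c p (parts B hB x p)) := by
        refine Finset.sum_congr rfl fun p _ => (S1 p).symm
    _ = ∑ x ∈ X, ∑ p : ZMod l,
          (if parts B hB x p ∈ E' then (1:ℚ) else 0) / (c p (parts B hB x p)) :=
        Finset.sum_comm
    _ ≤ ∑ x ∈ X, ((l : ℚ) - 1) * ((1:ℚ) / (c 0 (parts B hB x 0))) := by
        refine Finset.sum_le_sum fun x hx => ?_
        have hstep : ∀ p : ZMod l,
            (if parts B hB x p ∈ E' then (1:ℚ) else 0) / (c p (parts B hB x p))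
            = (if parts B hB x p ∈ E' then (1:ℚ) else 0) * ((1:ℚ) / (c 0 (parts B hB x 0))) := by
          intro p
          rw [Kconst x hx p, div_eq_mul_one_div]
        rw [Finset.sum_congr rfl (fun p _ => hstep p), ← Finset.sum_mul, Finset.sum_boole]
        have hw : (0:ℚ) ≤ (1:ℚ) / (c 0 (parts B hB x 0)) := by positivity
        exact mul_le_mul_of_nonneg_right (Kbound x hx) hw
    _ = ((l : ℚ) - 1) * ∑ x ∈ X, (1:ℚ) / (c 0 (parts B hB x 0)) := by
        rw [Finset.mul_sum]
    _ = ((l : ℚ) - 1) * T.card := by rw [S2]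

end UPM

namespace UPM

variable {α : Type*} [DecidableEq α] {k l : ℕ} [NeZero l]
variable (B : ZMod l → Finset α)
variable (hB : ∀ j, (B j).card = k)
variable (hd : ∀ ⦃j j' : ZMod l⦄, j ≠ j' → Disjoint (B j) (B j'))

include hB hd in
lemma Tset_card (hk : 1 ≤ k) :
    ((Tset k B).card : ℚ)
      = ∑ i ∈ Finset.range l, (-1:ℚ)^i * (l.choose i) * ((k*(l-i)).choose k) := by
  classical
  set W := Finset.univ.biUnion B with hW
  have hWcard : W.card = k * l := by
    rw [hW, Finset.card_biUnion (fun j _ j' _ hne => hd hne)]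
    simp only [hB]
    rw [Finset.sum_const, Finset.card_univ, ZMod.card, smul_eq_mul, mul_comm]
  have hUJ : ∀ J : Finset (ZMod l), (J.biUnion B).card = J.card * k := by
    intro J
    rw [Finset.card_biUnion (fun j _ j' _ hne => hd hne)]
    simp only [hB]
    rw [Finset.sum_const, smul_eq_mul]
  have hUJW : ∀ J : Finset (ZMod l), J.biUnion B ⊆ W := by
    intro J v hv
    obtain ⟨j, _, hj⟩ := Finset.mem_biUnion.1 hv
    exact Finset.mem_biUnion.2 ⟨j, Finset.mem_univ _, hj⟩
  have hA : ((Tset k B).card : ℚ)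
      = ∑ A ∈ W.powersetCard k, ∏ j : ZMod l, (if (A ∩ B j) = ∅ then (0:ℚ) else 1) := by
    rw [Tset]
    rw [← Finset.sum_boole]
    refine Finset.sum_congr rfl fun A _ => ?_
    rw [Finset.prod_congr rfl (fun j _ => show (if (A ∩ B j) = ∅ then (0:ℚ) else 1)
        = (if (A ∩ B j) ≠ ∅ then (1:ℚ) else 0) by by_cases h : (A ∩ B j) = ∅ <;> simp [h]),
      Fintype.prod_boole]
    congr 1
    · simp only [eq_iff_iff]
      constructor
      · intro h j; exact Finset.nonempty_iff_ne_empty.1 (h j)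
      · intro h j; exact Finset.nonempty_iff_ne_empty.2 (h j)
  have hexp : ∀ A : Finset α, ∏ j : ZMod l, (if (A ∩ B j) = ∅ then (0:ℚ) else 1)
      = ∑ J ∈ (Finset.univ : Finset (ZMod l)).powerset,
          (-1:ℚ)^J.card * ∏ j ∈ J, (if (A ∩ B j) = ∅ then (1:ℚ) else 0) := by
    intro A
    have h1 : ∀ j : ZMod l, (if (A ∩ B j) = ∅ then (0:ℚ) else 1)
        = (-(if (A ∩ B j) = ∅ then (1:ℚ) else 0)) + 1 := by
      intro j; by_cases h : (A ∩ B j) = ∅ <;> simp [h]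
    rw [Finset.prod_congr rfl (fun j _ => h1 j), Finset.prod_add]
    refine Finset.sum_congr rfl fun J _ => ?_
    rw [Finset.prod_const_one, mul_one]
    simp only [neg_eq_neg_one_mul ((if _ = ∅ then (1:ℚ) else 0)), Finset.prod_mul_distrib,
      Finset.prod_const]
  have hcount : ∀ J ∈ (Finset.univ : Finset (ZMod l)).powerset,
      ∑ A ∈ W.powersetCard k, ∏ j ∈ J, (if (A ∩ B j) = ∅ then (1:ℚ) else 0)
      = (((k*(l - J.card)).choose k : ℕ) : ℚ) := by
    intro J _
    have hiff : ∀ A ∈ W.powersetCard k,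
        (∏ j ∈ J, (if (A ∩ B j) = ∅ then (1:ℚ) else 0))
        = (if A ∈ (W \ J.biUnion B).powersetCard k then (1:ℚ) else 0) := by
      intro A hA
      obtain ⟨hsub, hcard⟩ := Finset.mem_powersetCard.1 hA
      have hPQ : (∀ j ∈ J, (A ∩ B j) = ∅) ↔ A ∈ (W \ J.biUnion B).powersetCard k := by
        rw [Finset.mem_powersetCard, Finset.subset_sdiff, Finset.disjoint_biUnion_right]
        constructor
        · intro h
          exact ⟨⟨hsub, fun j hj => Finset.disjoint_iff_inter_eq_empty.2 (h j hj)⟩, hcard⟩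
        · rintro ⟨⟨_, hdisj⟩, _⟩ j hj
          exact Finset.disjoint_iff_inter_eq_empty.1 (hdisj j hj)
      by_cases h : A ∈ (W \ J.biUnion B).powersetCard k
      · rw [if_pos h]
        refine Finset.prod_eq_one fun j hj => ?_
        rw [if_pos (hPQ.2 h j hj)]
      · rw [if_neg h]
        have hnot : ¬ ∀ j ∈ J, (A ∩ B j) = ∅ := fun hh => h (hPQ.1 hh)
        push_neg at hnot
        obtain ⟨j, hj, hne⟩ := hnot
        exact Finset.prod_eq_zero hj (by rw [if_neg hne.ne_empty])
    rw [Finset.sum_congr rfl hiff, Finset.sum_ite_mem, Finset.inter_eq_right.2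
      (Finset.powersetCard_mono Finset.sdiff_subset), Finset.sum_const, nsmul_eq_mul, mul_one]
    rw [Finset.card_powersetCard, Finset.card_sdiff_of_subset (hUJW J), hWcard, hUJ J]
    congr 2
    rw [Nat.mul_sub, mul_comm J.card k]
  calc ((Tset k B).card : ℚ)
      = ∑ A ∈ W.powersetCard k, ∑ J ∈ (Finset.univ : Finset (ZMod l)).powerset,
          (-1:ℚ)^J.card * ∏ j ∈ J, (if (A ∩ B j) = ∅ then (1:ℚ) else 0) := by
        rw [hA]; exact Finset.sum_congr rfl fun A _ => hexp A
    _ = ∑ J ∈ (Finset.univ : Finset (ZMod l)).powerset,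
          (-1:ℚ)^J.card * ∑ A ∈ W.powersetCard k,
            ∏ j ∈ J, (if (A ∩ B j) = ∅ then (1:ℚ) else 0) := by
        rw [Finset.sum_comm]
        exact Finset.sum_congr rfl fun J _ => by rw [Finset.mul_sum]
    _ = ∑ J ∈ (Finset.univ : Finset (ZMod l)).powerset,
          (-1:ℚ)^J.card * (((k*(l - J.card)).choose k : ℕ) : ℚ) := by
        exact Finset.sum_congr rfl fun J hJ => by rw [hcount J hJ]
    _ = ∑ i ∈ Finset.range (l+1), (-1:ℚ)^i * (l.choose i) * ((k*(l-i)).choose k) := by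
        rw [Finset.powerset_card_disjiUnion]; erw [Finset.sum_disjiUnion]
        rw [Finset.card_univ, ZMod.card]
        refine Finset.sum_congr rfl fun i _ => ?_
        have hcards : ∀ J ∈ Finset.powersetCard i (Finset.univ : Finset (ZMod l)),
            (-1:ℚ)^J.card * (((k*(l - J.card)).choose k : ℕ) : ℚ)
            = (-1:ℚ)^i * (((k*(l - i)).choose k : ℕ) : ℚ) := by
          intro J hJ
          rw [(Finset.mem_powersetCard.1 hJ).2]
        rw [Finset.sum_congr rfl hcards, Finset.sum_const,
          Finset.card_powersetCard, Finset.card_univ, ZMod.card, nsmul_eq_mul]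
        ring
    _ = ∑ i ∈ Finset.range l, (-1:ℚ)^i * (l.choose i) * ((k*(l-i)).choose k) := by
        rw [Finset.sum_range_succ]
        have : ((k*(l-l)).choose k : ℚ) = 0 := by
          rw [Nat.sub_self, Nat.mul_zero]
          norm_cast
          exact Nat.choose_eq_zero_of_lt hk
        rw [this, mul_zero, add_zero]

end UPM

namespace UPM

lemma perS {α : Type*} [DecidableEq α] (k l : ℕ) (hk : 1 ≤ k) (hl2 : 2 ≤ l)
    (S : Finset (Finset α)) (hScard : S.card = l)
    (hbcards : ∀ bs ∈ S, bs.card = k)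
    (hbdisj : ∀ bs ∈ S, ∀ bs' ∈ S, bs ≠ bs' → Disjoint bs bs')
    (E' : Finset (Finset α))
    (hE' : ∀ e ∈ E', e ⊆ S.biUnion id ∧ e.card = k ∧ ∀ bs ∈ S, (e ∩ bs).Nonempty)
    (hno : ∀ Q : Finset (Finset α), Q ⊆ E' →
      (∀ e ∈ Q, ∀ e' ∈ Q, e ≠ e' → Disjoint e e') →
      Q.biUnion id = S.biUnion id → Q.card = l → False) :
    (E'.card : ℚ) ≤ b k l ∧ 0 ≤ b k l := by
  classical
  haveI : NeZero l := ⟨by omega⟩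
  set eS := S.equivFin with heS
  set B : ZMod l → Finset α :=
    fun j => (eS.symm (Fin.cast hScard.symm ⟨j.val, ZMod.val_lt j⟩) : Finset α) with hBdef
  have hBmem : ∀ j, B j ∈ S := fun j => Finset.coe_mem _
  have hBinj : Function.Injective B := by
    intro j j' h
    have h1 := Subtype.coe_injective h
    have h2 := eS.symm.injective h1
    have h3 : j.val = j'.val := congrArg Fin.val (Fin.cast_injective _ h2)
    exact ZMod.val_injective l h3
  have hBsurj : ∀ bs ∈ S, ∃ j, B j = bs := by
    intro bs hbs
    set i : Fin l := Fin.cast hScard (eS ⟨bs, hbs⟩) with hi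
    refine ⟨(i.val : ZMod l), ?_⟩
    have hval : ((i.val : ZMod l)).val = i.val := ZMod.val_cast_of_lt i.isLt
    have : (Fin.cast hScard.symm ⟨((i.val : ZMod l)).val, ZMod.val_lt _⟩ : Fin S.card)
        = eS ⟨bs, hbs⟩ := by
      apply Fin.ext
      have hlt : (eS ⟨bs, hbs⟩).val < l := hScard ▸ (eS ⟨bs, hbs⟩).isLt
      simp [hval, hi, Nat.mod_eq_of_lt hlt]
    rw [hBdef]
    simp only [this, Equiv.symm_apply_apply]
  have hB : ∀ j, (B j).card = k := fun j => hbcards _ (hBmem j)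
  have hd : ∀ ⦃j j' : ZMod l⦄, j ≠ j' → Disjoint (B j) (B j') := by
    intro j j' hne
    exact hbdisj _ (hBmem j) _ (hBmem j') (fun h => hne (hBinj h))
  have hWeq : Finset.univ.biUnion B = S.biUnion id := by
    ext v
    constructor
    · intro hv
      obtain ⟨j, _, hj⟩ := Finset.mem_biUnion.1 hv
      exact Finset.mem_biUnion.2 ⟨B j, hBmem j, hj⟩
    · intro hv
      obtain ⟨bs, hbs, hbv⟩ := Finset.mem_biUnion.1 hv
      obtain ⟨j, rfl⟩ := hBsurj bs hbs
      exact Finset.mem_biUnion.2 ⟨j, Finset.mem_univ _, hbv⟩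
  have hE'T : ∀ e ∈ E', e ∈ Tset k B := by
    intro e he
    obtain ⟨hsub, hcard, hmeets⟩ := hE' e he
    exact mem_Tset.2 ⟨by rw [hWeq]; exact hsub, hcard, fun j => hmeets _ (hBmem j)⟩
  have hnog : ∀ g : ZMod l → Finset α, (∀ p, g p ∈ E') →
      (∀ p p', p ≠ p' → Disjoint (g p) (g p')) →
      Finset.univ.biUnion g = Finset.univ.biUnion B → False := by
    intro g hgE hgdisj hgcover
    have hginj : Function.Injective g := by
      intro p p' h
      by_contra hne
      have hdisj := hgdisj p p' hne
      rw [h] at hdisj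
      have hne' : (g p').Nonempty := by
        rw [← Finset.card_pos, (hE' _ (hgE p')).2.1]
        omega
      have hemp := disjoint_self.1 hdisj
      rw [Finset.bot_eq_empty] at hemp
      rw [hemp] at hne'
      exact Finset.not_nonempty_empty hne'
    refine hno (Finset.univ.image g) ?_ ?_ ?_ ?_
    · intro e he
      obtain ⟨p, _, rfl⟩ := Finset.mem_image.1 he
      exact hgE p
    · intro e he e' he' hne
      obtain ⟨p, _, rfl⟩ := Finset.mem_image.1 he
      obtain ⟨p', _, rfl⟩ := Finset.mem_image.1 he'
      exact hgdisj p p' (fun h => hne (by rw [h]))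
    · rw [← hWeq, ← hgcover]
      ext v
      constructor
      · intro hv
        obtain ⟨e, he, hev⟩ := Finset.mem_biUnion.1 hv
        obtain ⟨p, _, rfl⟩ := Finset.mem_image.1 he
        exact Finset.mem_biUnion.2 ⟨p, Finset.mem_univ _, hev⟩
      · intro hv
        obtain ⟨p, _, hpv⟩ := Finset.mem_biUnion.1 hv
        exact Finset.mem_biUnion.2 ⟨g p, Finset.mem_image.2 ⟨p, Finset.mem_univ _, rfl⟩, hpv⟩
    · rw [Finset.card_image_of_injective _ hginj, Finset.card_univ, ZMod.card]
  have hmain := core_ineq B hB hd E' hE'T hnog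
  have hTeq : ((Tset k B).card : ℚ)
      = ∑ i ∈ Finset.range l, (-1:ℚ)^i * (l.choose i) * ((k*(l-i)).choose k) :=
    Tset_card B hB hd hk
  have hbeq : b k l = (((l:ℚ) - 1) / l) * ((Tset k B).card : ℚ) := by
    rw [b, hTeq]
  have hlpos : (0:ℚ) < l := by positivity
  have hl1 : (1:ℚ) ≤ l := by exact_mod_cast (by omega : 1 ≤ l)
  constructor
  · rw [hbeq, div_mul_eq_mul_div, le_div_iff₀ hlpos, mul_comm]
    exact hmain
  · rw [hbeq]
    apply mul_nonneg
    · apply div_nonneg _ (le_of_lt hlpos)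
      linarith
    · exact Nat.cast_nonneg _

end UPM

theorem stmt_13 {α : Type*} [DecidableEq α] (k m : ℕ) (hk : 2 ≤ k) (hm : 1 ≤ m)
    (V : Finset α) (hV : V.card = k * m)
    (E : Finset (Finset α))
    (hE : ∀ e ∈ E, e ⊆ V ∧ e.card = k)
    (huniq : ∃! P : Finset (Finset α),
      P ⊆ E ∧ (∀ e ∈ P, ∀ e' ∈ P, e ≠ e' → Disjoint e e') ∧ P.biUnion id = V) :
    (E.card : ℚ) ≤ f k m := by
  classical
  obtain ⟨P, ⟨hPE, hPdisj, hPcover⟩, hPuniq⟩ := huniq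
  have hk1 : 1 ≤ k := by omega
  have hPcards : ∀ bs ∈ P, bs.card = k := fun bs h => (hE bs (hPE h)).2
  have hPm : P.card = m := by
    have h1 : ∑ bs ∈ P, (id bs : Finset α).card = V.card := by
      rw [← hPcover]
      exact (Finset.card_biUnion (fun x hx y hy hxy => hPdisj x hx y hy hxy)).symm
    simp only [id] at h1
    rw [Finset.sum_congr rfl hPcards, Finset.sum_const, smul_eq_mul, hV] at h1
    have h2 : k * P.card = k * m := by rw [mul_comm] at h1; exact h1
    exact Nat.eq_of_mul_eq_mul_left (by omega) h2
  set sp : Finset α → Finset (Finset α) :=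
    fun e => P.filter (fun bs => (e ∩ bs).Nonempty) with hsp
  have hsp_sub : ∀ e, sp e ⊆ P := fun e => Finset.filter_subset _ _
  have hsp_cover : ∀ e ∈ E, e ⊆ (sp e).biUnion id := by
    intro e he v hv
    have hvV : v ∈ V := (hE e he).1 hv
    rw [← hPcover] at hvV
    obtain ⟨bs, hbs, hvbs⟩ := Finset.mem_biUnion.1 hvV
    exact Finset.mem_biUnion.2 ⟨bs, Finset.mem_filter.2 ⟨hbs, ⟨v, Finset.mem_inter.2 ⟨hv, hvbs⟩⟩⟩, hvbs⟩
  have hsp_nonempty : ∀ e ∈ E, (sp e).Nonempty := by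
    intro e he
    have : e.Nonempty := by rw [← Finset.card_pos, (hE e he).2]; omega
    obtain ⟨v, hv⟩ := this
    have hvV : v ∈ V := (hE e he).1 hv
    rw [← hPcover] at hvV
    obtain ⟨bs, hbs, hvbs⟩ := Finset.mem_biUnion.1 hvV
    exact ⟨bs, Finset.mem_filter.2 ⟨hbs, ⟨v, Finset.mem_inter.2 ⟨hv, hvbs⟩⟩⟩⟩
  have hsp_card_le : ∀ e ∈ E, (sp e).card ≤ k := by
    intro e he
    have hch : ∀ bs, bs ∈ sp e → ∃ v, v ∈ e ∧ v ∈ bs := by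
      intro bs hbs
      obtain ⟨v, hv⟩ := (Finset.mem_filter.1 hbs).2
      exact ⟨v, (Finset.mem_inter.1 hv).1, (Finset.mem_inter.1 hv).2⟩
    have hene : e.Nonempty := by rw [← Finset.card_pos, (hE e he).2]; omega
    have hα : Nonempty α := ⟨hene.choose⟩
    choose! ch hch1 hch2 using hch
    rw [← (hE e he).2]
    refine Finset.card_le_card_of_injOn ch (fun bs hbs => hch1 bs hbs) ?_
    intro bs hbs bs' hbs' heq
    by_contra hne
    have hd := hPdisj bs (hsp_sub e hbs) bs' (hsp_sub e hbs') hne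
    exact Finset.disjoint_left.1 hd (hch2 bs hbs) (heq ▸ hch2 bs' hbs')
  -- the no-alternative-matching property, per subset S of P with 2 ≤ |S|
  have hno : ∀ S ⊆ P, 2 ≤ S.card → ∀ Q : Finset (Finset α),
      Q ⊆ E.filter (fun e => sp e = S) →
      (∀ e ∈ Q, ∀ e' ∈ Q, e ≠ e' → Disjoint e e') →
      Q.biUnion id = S.biUnion id → Q.card = S.card → False := by
    intro S hSP hS2 Q hQsub hQdisj hQcover hQcard
    have hQE : ∀ q ∈ Q, q ∈ E := fun q hq => (Finset.mem_filter.1 (hQsub hq)).1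
    have hQsp : ∀ q ∈ Q, sp q = S := fun q hq => (Finset.mem_filter.1 (hQsub hq)).2
    have hQnotP : ∀ q ∈ Q, q ∉ P := by
      intro q hq hqP
      obtain ⟨bs1, hbs1, bs2, hbs2, hbsne⟩ := Finset.one_lt_card.1 hS2
      have hmeet : ∀ bs ∈ S, (q ∩ bs).Nonempty := by
        intro bs hbs
        have : bs ∈ sp q := by rw [hQsp q hq]; exact hbs
        exact (Finset.mem_filter.1 this).2
      have heq1 : q = bs1 := by
        by_contra hne
        exact Finset.not_nonempty_empty (Finset.disjoint_iff_inter_eq_empty.1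
          (hPdisj q hqP bs1 (hSP hbs1) hne) ▸ hmeet bs1 hbs1)
      have heq2 : q = bs2 := by
        by_contra hne
        exact Finset.not_nonempty_empty (Finset.disjoint_iff_inter_eq_empty.1
          (hPdisj q hqP bs2 (hSP hbs2) hne) ▸ hmeet bs2 hbs2)
      exact hbsne (heq1 ▸ heq2 ▸ rfl)
    have hQne : Q.Nonempty := by
      rw [← Finset.card_pos, hQcard]; omega
    obtain ⟨q0, hq0⟩ := hQne
    set P' := (P \ S) ∪ Q with hP'
    have hP'prop : P' ⊆ E ∧ (∀ e ∈ P', ∀ e' ∈ P', e ≠ e' → Disjoint e e') ∧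
        P'.biUnion id = V := by
      refine ⟨?_, ?_, ?_⟩
      · intro e he
        rcases Finset.mem_union.1 he with h | h
        · exact hPE (Finset.mem_sdiff.1 h).1
        · exact hQE e h
      · have hPQdisj : ∀ x ∈ P \ S, ∀ q ∈ Q, Disjoint x q := by
          intro x hx q hq
          obtain ⟨hxP, hxS⟩ := Finset.mem_sdiff.1 hx
          have hqS : q ⊆ S.biUnion id := by
            rw [← hQcover]
            intro v hv
            exact Finset.mem_biUnion.2 ⟨q, hq, hv⟩
          refine Finset.disjoint_of_subset_right hqS ?_
          rw [Finset.disjoint_biUnion_right]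
          intro bs hbs
          exact hPdisj x hxP bs (hSP hbs) (fun h => hxS (h ▸ hbs))
        intro e he e' he' hne
        rcases Finset.mem_union.1 he with h | h <;> rcases Finset.mem_union.1 he' with h' | h'
        · exact hPdisj e (Finset.mem_sdiff.1 h).1 e' (Finset.mem_sdiff.1 h').1 hne
        · exact hPQdisj e h e' h'
        · exact (hPQdisj e' h' e h).symm
        · exact hQdisj e h e' h' hne
      · have hbu : ∀ (s t : Finset (Finset α)), (s ∪ t).biUnion id = s.biUnion id ∪ t.biUnion id := by
          intro s t
          ext v
          simp only [Finset.mem_biUnion, Finset.mem_union]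
          constructor
          · rintro ⟨e, he | he, hv⟩
            · exact Or.inl ⟨e, he, hv⟩
            · exact Or.inr ⟨e, he, hv⟩
          · rintro (⟨e, he, hv⟩ | ⟨e, he, hv⟩)
            · exact ⟨e, Or.inl he, hv⟩
            · exact ⟨e, Or.inr he, hv⟩
        rw [hbu, hQcover]
        rw [← hPcover]
        have hsplit2 : P = (P \ S) ∪ S := (Finset.sdiff_union_of_subset hSP).symm
        conv_rhs => rw [hsplit2]
        rw [hbu]
    have : P' = P := hPuniq P' hP'prop
    have hq0P : q0 ∈ P := this ▸ Finset.mem_union.2 (Or.inr hq0)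
    exact hQnotP q0 hq0 hq0P
  -- fiberwise decomposition
  have hdecomp : E.card = ∑ S ∈ P.powerset, (E.filter (fun e => sp e = S)).card :=
    Finset.card_eq_sum_card_fiberwise
      (fun e he => Finset.mem_powerset.2 (hsp_sub e))
  have hdecomp2 : (E.card : ℚ)
      = ∑ i ∈ Finset.range (m+1), ∑ S ∈ Finset.powersetCard i P,
          ((E.filter (fun e => sp e = S)).card : ℚ) := by
    rw [hdecomp]
    push_cast
    rw [Finset.powerset_card_disjiUnion]; erw [Finset.sum_disjiUnion]; rw [hPm]
  -- bounds
  have claim0 : ∑ S ∈ Finset.powersetCard 0 P,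
      ((E.filter (fun e => sp e = S)).card : ℚ) = 0 := by
    rw [Finset.powersetCard_zero, Finset.sum_singleton]
    norm_cast
    rw [Finset.card_eq_zero, Finset.filter_eq_empty_iff]
    intro e he h
    exact (hsp_nonempty e he).ne_empty h
  have claim1 : ∑ S ∈ Finset.powersetCard 1 P,
      ((E.filter (fun e => sp e = S)).card : ℚ) ≤ m := by
    have hone : ∀ S ∈ Finset.powersetCard 1 P,
        ((E.filter (fun e => sp e = S)).card : ℚ) ≤ 1 := by
      intro S hS
      obtain ⟨hSP, hScard⟩ := Finset.mem_powersetCard.1 hS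
      obtain ⟨bs, rfl⟩ := Finset.card_eq_one.1 hScard
      have hsub : E.filter (fun e => sp e = {bs}) ⊆ {bs} := by
        intro e he
        obtain ⟨heE, hesp⟩ := Finset.mem_filter.1 he
        have h1 : e ⊆ bs := by
          have := hsp_cover e heE
          rw [hesp, Finset.singleton_biUnion] at this
          exact this
        have h2 : bs.card ≤ e.card := by
          rw [(hE e heE).2, hPcards bs (hSP (Finset.mem_singleton_self bs))]
        rw [Finset.mem_singleton]
        exact Finset.eq_of_subset_of_card_le h1 h2
      have := Finset.card_le_card hsub
      rw [Finset.card_singleton] at this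
      exact_mod_cast this
    calc ∑ S ∈ Finset.powersetCard 1 P, ((E.filter (fun e => sp e = S)).card : ℚ)
        ≤ ∑ _S ∈ Finset.powersetCard 1 P, (1:ℚ) := Finset.sum_le_sum hone
      _ = ((Finset.powersetCard 1 P).card : ℚ) := by rw [Finset.sum_const, nsmul_eq_mul, mul_one]
      _ = m := by rw [Finset.card_powersetCard, hPm, Nat.choose_one_right]
  have claim3 : ∀ i, 2 ≤ i → i ≤ k → ∀ S ∈ Finset.powersetCard i P,
      ((E.filter (fun e => sp e = S)).card : ℚ) ≤ b k i := by
    intro i hi2 hik S hS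
    obtain ⟨hSP, hScard⟩ := Finset.mem_powersetCard.1 hS
    refine (UPM.perS k i hk1 hi2 S hScard (fun bs hbs => hPcards bs (hSP hbs))
      (fun bs hbs bs' hbs' hne => hPdisj bs (hSP hbs) bs' (hSP hbs') hne)
      (E.filter (fun e => sp e = S)) ?_ ?_).1
    · intro e he
      obtain ⟨heE, hesp⟩ := Finset.mem_filter.1 he
      refine ⟨by rw [← hesp]; exact hsp_cover e heE, (hE e heE).2, ?_⟩
      intro bs hbs
      have : bs ∈ sp e := by rw [hesp]; exact hbs
      exact (Finset.mem_filter.1 this).2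
    · intro Q hQsub hQdisj hQcover hQcard
      exact hno S hSP (hScard ▸ hi2) Q hQsub hQdisj hQcover (hScard ▸ hQcard)
  have claim4 : ∀ i, k < i → ∀ S ∈ Finset.powersetCard i P,
      ((E.filter (fun e => sp e = S)).card : ℚ) = 0 := by
    intro i hik S hS
    obtain ⟨hSP, hScard⟩ := Finset.mem_powersetCard.1 hS
    norm_cast
    rw [Finset.card_eq_zero, Finset.filter_eq_empty_iff]
    intro e he h
    have := hsp_card_le e he
    rw [h, hScard] at this
    omega
  have claim5 : ∀ i ∈ Finset.Icc 2 k, (0:ℚ) ≤ b k i * (m.choose i) := by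
    intro i hi
    obtain ⟨hi2, hik⟩ := Finset.mem_Icc.1 hi
    rcases le_or_gt i m with him | him
    · obtain ⟨S, hSP, hScard⟩ := Finset.exists_subset_card_eq (s := P) (n := i) (by rw [hPm]; exact him)
      have hb := (UPM.perS k i hk1 hi2 S hScard (fun bs hbs => hPcards bs (hSP hbs))
        (fun bs hbs bs' hbs' hne => hPdisj bs (hSP hbs) bs' (hSP hbs') hne)
        ∅ (by intro e he; exact absurd he (Finset.notMem_empty e)) ?_).2
      · exact mul_nonneg hb (Nat.cast_nonneg _)
      · intro Q hQsub hQdisj hQcover hQcard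
        rw [Finset.subset_empty] at hQsub
        rw [hQsub, Finset.card_empty] at hQcard
        omega
    · rw [Nat.choose_eq_zero_of_lt him]
      norm_num
  -- final chain
  rw [hdecomp2, f]
  have hsplit : ∑ i ∈ Finset.range (m+1), ∑ S ∈ Finset.powersetCard i P,
      ((E.filter (fun e => sp e = S)).card : ℚ)
      = (∑ i ∈ Finset.Ico 0 2, ∑ S ∈ Finset.powersetCard i P,
          ((E.filter (fun e => sp e = S)).card : ℚ))
        + ∑ i ∈ Finset.Ico 2 (m+1), ∑ S ∈ Finset.powersetCard i P,
          ((E.filter (fun e => sp e = S)).card : ℚ) := by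
    rw [Finset.range_eq_Ico, ← Finset.sum_Ico_consecutive _ (by omega : 0 ≤ 2) (by omega : 2 ≤ m+1)]
  rw [hsplit]
  have hfirst : ∑ i ∈ Finset.Ico 0 2, ∑ S ∈ Finset.powersetCard i P,
      ((E.filter (fun e => sp e = S)).card : ℚ) ≤ m := by
    have : Finset.Ico 0 2 = {0, 1} := by decide
    rw [this, Finset.sum_insert (by decide), Finset.sum_singleton, claim0, zero_add]
    exact claim1
  have hsecond : ∑ i ∈ Finset.Ico 2 (m+1), ∑ S ∈ Finset.powersetCard i P,
      ((E.filter (fun e => sp e = S)).card : ℚ)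
      ≤ ∑ i ∈ Finset.Icc 2 k, b k i * (m.choose i) := by
    have hzero : ∀ i ∈ Finset.Ico 2 (m+1), ¬ (i ≤ k) →
        ∑ S ∈ Finset.powersetCard i P, ((E.filter (fun e => sp e = S)).card : ℚ) = 0 := by
      intro i _ hik
      exact Finset.sum_eq_zero (claim4 i (by omega))
    calc ∑ i ∈ Finset.Ico 2 (m+1), ∑ S ∈ Finset.powersetCard i P,
          ((E.filter (fun e => sp e = S)).card : ℚ)
        = ∑ i ∈ (Finset.Ico 2 (m+1)).filter (fun i => i ≤ k), ∑ S ∈ Finset.powersetCard i P,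
          ((E.filter (fun e => sp e = S)).card : ℚ) := by
          refine (Finset.sum_filter_of_ne ?_).symm
          intro i hi hne
          by_contra hik
          exact hne (hzero i hi hik)
      _ ≤ ∑ i ∈ (Finset.Ico 2 (m+1)).filter (fun i => i ≤ k), b k i * (m.choose i) := by
          refine Finset.sum_le_sum fun i hi => ?_
          obtain ⟨hi1, hi2⟩ := Finset.mem_filter.1 hi
          rw [Finset.mem_Ico] at hi1
          calc ∑ S ∈ Finset.powersetCard i P, ((E.filter (fun e => sp e = S)).card : ℚ)
              ≤ ∑ _S ∈ Finset.powersetCard i P, b k i :=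
                Finset.sum_le_sum (claim3 i (by omega) hi2)
            _ = b k i * (m.choose i) := by
                rw [Finset.sum_const, nsmul_eq_mul, Finset.card_powersetCard, hPm, mul_comm]
      _ ≤ ∑ i ∈ Finset.Icc 2 k, b k i * (m.choose i) := by
          refine Finset.sum_le_sum_of_subset_of_nonneg ?_ ?_
          · intro i hi
            obtain ⟨hi1, hi2⟩ := Finset.mem_filter.1 hi
            rw [Finset.mem_Ico] at hi1
            rw [Finset.mem_Icc]
            omega
          · intro i hi _
            exact claim5 i hi
  linarith
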